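/- Let s(r) = sin(πr)/(πr) for r ≠ 0 with s(0) = 1, and define ε_s(r) = ∫₀^r s(u) du − (1/2)·sgn(r). For every real k with k ≠ 0 and |k| ≠ 1/2, the improper integral lim_{R→∞} ∫_{−R}^{R} ε_s(r)·e^{2πikr} dr exists and equals 0 when 0 < |k| < 1/2, and equals 1/(2πik) when |k| > 1/2. -/

import Mathlib

open MeasureTheory Real Filter Set Topology intervalIntegral

/-- The sine kernel `s(r) = sin(π r)/(π r)`, with `s(0) = 1`. -/
noncomputable def sKer (r : ℝ) : ℝ :=
  if r = 0 then 1 else Real.sin (Real.pi * r) / (Real.pi * r)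

/-- `ε_s(r) = ∫₀^r s(u) du − (1/2) sgn r`. -/
noncomputable def epsS (r : ℝ) : ℝ :=
  (∫ u in (0:ℝ)..r, sKer u) - (1/2) * Real.sign r


lemma lapl_sin (t R : ℝ) :
    ∫ x in (0:ℝ)..R, Real.exp (-(t*x)) * Real.sin x
      = (1 - Real.exp (-(t*R)) * (Real.cos R + t * Real.sin R)) / (1 + t^2) := by
  have h1 : (0:ℝ) < 1 + t^2 := by positivity
  have key : ∀ x : ℝ, HasDerivAt (fun y => -(Real.exp (-(t*y)) * (t * Real.sin y + Real.cos y)) / (1 + t^2))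
      (Real.exp (-(t*x)) * Real.sin x) x := by
    intro x
    have he : HasDerivAt (fun y : ℝ => Real.exp (-(t*y))) (-t * Real.exp (-(t*x))) x := by
      have := (Real.hasDerivAt_exp (-(t*x))).comp x (((hasDerivAt_id x).const_mul t).neg)
      exact this.congr_deriv (by ring)
    have hs : HasDerivAt (fun y : ℝ => t * Real.sin y + Real.cos y)
        (t * Real.cos x - Real.sin x) x := ((Real.hasDerivAt_sin x).const_mul t).add (Real.hasDerivAt_cos x)
    have := ((he.mul hs).neg).div_const (1 + t^2)
    refine this.congr_deriv ?_
    field_simp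
    ring
  rw [intervalIntegral.integral_eq_sub_of_hasDerivAt (fun x _ => key x)]
  · field_simp
    simp only [mul_zero, neg_zero, Real.exp_zero, Real.sin_zero, Real.cos_zero]
    ring
  · apply Continuous.intervalIntegrable
    continuity



-- ∫ t in Ioi 0, exp (-(r*t)) = 1/r
lemma integral_exp_neg_mul (r : ℝ) (hr : 0 < r) :
    ∫ t in Ioi (0:ℝ), Real.exp (-(r*t)) = 1/r := by
  have := integral_rpow_mul_exp_neg_mul_Ioi (a := 1) (r := r) one_pos hr
  simpa using this

lemma integrable_lapl (R : ℝ) (hR : 0 < R) :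
    Integrable (Function.uncurry fun x t => Real.exp (-(t*x)) * Real.sin x)
      ((volume.restrict (Ioc (0:ℝ) R)).prod (volume.restrict (Ioi (0:ℝ)))) := by
  have hcont : Continuous (Function.uncurry fun x t : ℝ => Real.exp (-(t*x)) * Real.sin x) := by
    apply Continuous.mul
    · exact (continuous_snd.mul continuous_fst).neg.rexp
    · exact Real.continuous_sin.comp continuous_fst
  rw [integrable_prod_iff hcont.aestronglyMeasurable]
  constructor
  · filter_upwards [ae_restrict_mem measurableSet_Ioc] with x hx
    have hx0 : 0 < x := hx.1
    have : Integrable (fun t : ℝ => Real.exp (-x * t) * Real.sin x) (volume.restrict (Ioi 0)) :=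
      (exp_neg_integrableOn_Ioi 0 hx0).mul_const _
    exact this.congr (by filter_upwards with t; simp [Function.uncurry, mul_comm])
  · have hval : ∀ᵐ x ∂(volume.restrict (Ioc (0:ℝ) R)),
        (∫ t in Ioi (0:ℝ), ‖Real.exp (-(t*x)) * Real.sin x‖) = |Real.sin x| / x := by
      filter_upwards [ae_restrict_mem measurableSet_Ioc] with x hx
      have hx0 : 0 < x := hx.1
      calc (∫ t in Ioi (0:ℝ), ‖Real.exp (-(t*x)) * Real.sin x‖)
          = ∫ t in Ioi (0:ℝ), Real.exp (-(x*t)) * |Real.sin x| := by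
            congr 1; ext t
            rw [norm_mul, Real.norm_eq_abs, Real.norm_eq_abs, abs_of_pos (Real.exp_pos _),
              mul_comm t x]
        _ = (∫ t in Ioi (0:ℝ), Real.exp (-(x*t))) * |Real.sin x| := by
            rw [MeasureTheory.integral_mul_const]
        _ = |Real.sin x| / x := by
            rw [integral_exp_neg_mul x hx0, one_div, inv_mul_eq_div]
    apply Integrable.congr (f := fun x : ℝ => |Real.sin x| / x)
      (g := fun x => ∫ t in Ioi (0:ℝ), ‖Function.uncurry (fun x t : ℝ => Real.exp (-(t*x)) * Real.sin x) (x, t)‖)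
      ?_ (by filter_upwards [hval] with x h; simpa [Function.uncurry] using h.symm)
    apply Integrable.mono' (g := fun _ : ℝ => (1:ℝ))
    · rw [integrable_const_iff]; right; exact ⟨by rw [Measure.restrict_apply_univ]; exact measure_Ioc_lt_top⟩
    · exact (measurable_sin.abs.div measurable_id).aestronglyMeasurable
    · filter_upwards [ae_restrict_mem measurableSet_Ioc] with x hx
      have hx0 : 0 < x := hx.1
      rw [Real.norm_eq_abs, abs_div, abs_abs, abs_of_pos hx0, div_le_one hx0]
      calc |Real.sin x| ≤ |x| := Real.abs_sin_le_abs
        _ = x := abs_of_pos hx0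


lemma sinc_eq_lapl (R : ℝ) (hR : 0 < R) :
    ∫ x in (0:ℝ)..R, Real.sin x / x
      = ∫ t in Ioi (0:ℝ), (1 - Real.exp (-(t*R)) * (Real.cos R + t*Real.sin R)) / (1+t^2) := by
  rw [intervalIntegral.integral_of_le hR.le]
  have swap := integral_integral_swap (f := fun x t : ℝ => Real.exp (-(t*x)) * Real.sin x)
    (μ := volume.restrict (Ioc (0:ℝ) R)) (ν := volume.restrict (Ioi (0:ℝ)))
    (integrable_lapl R hR)
  have hL : ∫ x in Ioc (0:ℝ) R, (∫ t in Ioi (0:ℝ), Real.exp (-(t*x)) * Real.sin x)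
      = ∫ x in Ioc (0:ℝ) R, Real.sin x / x := by
    apply setIntegral_congr_fun measurableSet_Ioc
    intro x hx
    have hx0 : 0 < x := hx.1
    have : ∀ t : ℝ, Real.exp (-(t*x)) * Real.sin x = Real.exp (-(x*t)) * Real.sin x := by
      intro t; rw [mul_comm t x]
    simp_rw [this]
    rw [MeasureTheory.integral_mul_const, integral_exp_neg_mul x hx0, one_div, inv_mul_eq_div]
  have hR' : ∫ t in Ioi (0:ℝ), (∫ x in Ioc (0:ℝ) R, Real.exp (-(t*x)) * Real.sin x)
      = ∫ t in Ioi (0:ℝ), (1 - Real.exp (-(t*R)) * (Real.cos R + t*Real.sin R)) / (1+t^2) := by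
    apply setIntegral_congr_fun measurableSet_Ioi
    intro t _
    dsimp only
    rw [← intervalIntegral.integral_of_le hR.le, lapl_sin]
  rw [← hL, ← hR', swap]

lemma err_integrable (R : ℝ) (hR : 0 < R) :
    IntegrableOn (fun t : ℝ => Real.exp (-(t*R)) * (Real.cos R + t*Real.sin R) / (1+t^2))
      (Ioi (0:ℝ)) := by
  apply Integrable.mono' (g := fun t : ℝ => 2 * Real.exp (-R * t))
  · exact (exp_neg_integrableOn_Ioi 0 hR).const_mul 2
  · apply Continuous.aestronglyMeasurable
    apply Continuous.div
    · exact ((continuous_id.mul continuous_const).neg.rexp).mul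
        (continuous_const.add (continuous_id.mul continuous_const))
    · continuity
    · intro t; positivity
  · filter_upwards [ae_restrict_mem measurableSet_Ioi] with t ht
    have ht0 : (0:ℝ) < t := ht
    have h1 : (0:ℝ) < 1 + t^2 := by positivity
    rw [Real.norm_eq_abs, abs_div, abs_of_pos h1, abs_mul,
      abs_of_pos (Real.exp_pos _), div_le_iff₀ h1, mul_comm t R, neg_mul]
    have hb : |Real.cos R + t * Real.sin R| ≤ 1 + t := by
      calc |Real.cos R + t * Real.sin R| ≤ |Real.cos R| + |t * Real.sin R| := abs_add_le _ _
        _ ≤ 1 + t := by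
            have := Real.abs_cos_le_one R
            have h2 : |t * Real.sin R| ≤ t := by
              rw [abs_mul, abs_of_pos ht0]
              nlinarith [Real.abs_sin_le_one R, abs_nonneg (Real.sin R)]
            linarith
    have he : (0:ℝ) < Real.exp (-(R*t)) := Real.exp_pos _
    nlinarith [mul_le_mul_of_nonneg_left hb he.le, mul_nonneg he.le (sq_nonneg (t-1)),
      mul_nonneg he.le ht0.le, mul_nonneg he.le (sq_nonneg t)]

lemma abs_dirichlet_sub (R : ℝ) (hR : 0 < R) :
    |(∫ x in (0:ℝ)..R, Real.sin x / x) - π/2| ≤ 2 / R := by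
  have h2 : IntegrableOn (fun t : ℝ => (1+t^2)⁻¹) (Ioi (0:ℝ)) :=
    integrable_inv_one_add_sq.integrableOn
  have hsub : ∫ t in Ioi (0:ℝ), (1 - Real.exp (-(t*R)) * (Real.cos R + t*Real.sin R)) / (1+t^2)
      = (∫ t in Ioi (0:ℝ), (1+t^2)⁻¹)
        - ∫ t in Ioi (0:ℝ), Real.exp (-(t*R)) * (Real.cos R + t*Real.sin R) / (1+t^2) := by
    rw [← integral_sub h2 (err_integrable R hR)]
    congr 1; ext t
    field_simp
  rw [sinc_eq_lapl R hR, hsub, integral_Ioi_inv_one_add_sq]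
  simp only [Real.arctan_zero, sub_zero]
  rw [sub_sub_cancel_left, abs_neg]
  rw [← Real.norm_eq_abs]
  calc ‖∫ t in Ioi (0:ℝ), Real.exp (-(t*R)) * (Real.cos R + t*Real.sin R) / (1+t^2)‖
      ≤ ∫ t in Ioi (0:ℝ), 2 * Real.exp (-R * t) := by
        apply MeasureTheory.norm_integral_le_of_norm_le ((exp_neg_integrableOn_Ioi 0 hR).const_mul 2)
        filter_upwards [ae_restrict_mem measurableSet_Ioi] with t ht
        have ht0 : (0:ℝ) < t := ht
        have h1 : (0:ℝ) < 1 + t^2 := by positivity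
        rw [Real.norm_eq_abs, abs_div, abs_of_pos h1, abs_mul,
          abs_of_pos (Real.exp_pos _), div_le_iff₀ h1, mul_comm t R, neg_mul]
        have hb : |Real.cos R + t * Real.sin R| ≤ 1 + t := by
          calc |Real.cos R + t * Real.sin R| ≤ |Real.cos R| + |t * Real.sin R| := abs_add_le _ _
            _ ≤ 1 + t := by
                have := Real.abs_cos_le_one R
                have h2 : |t * Real.sin R| ≤ t := by
                  rw [abs_mul, abs_of_pos ht0]
                  nlinarith [Real.abs_sin_le_one R, abs_nonneg (Real.sin R)]
                linarith
        have he : (0:ℝ) < Real.exp (-(R*t)) := Real.exp_pos _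
        nlinarith [mul_le_mul_of_nonneg_left hb he.le, mul_nonneg he.le (sq_nonneg (t-1)),
          mul_nonneg he.le ht0.le, mul_nonneg he.le (sq_nonneg t)]
    _ = 2 / R := by
        rw [MeasureTheory.integral_const_mul]
        simp_rw [neg_mul]
        rw [integral_exp_neg_mul R hR]
        ring

lemma tendsto_dirichlet :
    Tendsto (fun R : ℝ => ∫ x in (0:ℝ)..R, Real.sin x / x) atTop (𝓝 (π/2)) := by
  rw [← tendsto_sub_nhds_zero_iff]
  apply squeeze_zero_norm' (a := fun R : ℝ => 2 / R)
  · filter_upwards [eventually_gt_atTop (0:ℝ)] with R hR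
    simpa [Real.norm_eq_abs] using abs_dirichlet_sub R hR
  · simpa using tendsto_const_nhds.div_atTop (tendsto_id (α := ℝ))

noncomputable def snc (x : ℝ) : ℝ := if x = 0 then 1 else Real.sin x / x

lemma snc_eq_update : snc = Function.update (fun x : ℝ => (Real.sin x - Real.sin 0) / (x - 0)) 0 1 := by
  funext x
  rcases eq_or_ne x 0 with rfl | hx
  · simp [snc, Function.update]
  · simp [snc, Function.update, hx]

lemma snc_cont : Continuous snc := by
  rw [continuous_iff_continuousAt]
  intro x
  rcases eq_or_ne x 0 with rfl | hx
  · rw [snc_eq_update]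
    have : HasDerivAt Real.sin 1 0 := by simpa using Real.hasDerivAt_sin 0
    exact this.continuousAt_div
  · have h1 : ContinuousAt (fun y : ℝ => Real.sin y / y) x :=
      (Real.continuous_sin.continuousAt).div continuousAt_id hx
    apply h1.congr
    filter_upwards [isOpen_ne.mem_nhds hx] with y hy
    simp [snc, hy]

lemma snc_even (x : ℝ) : snc (-x) = snc x := by
  rcases eq_or_ne x 0 with rfl | hx
  · simp
  · simp only [snc, neg_eq_zero, if_neg hx]
    rw [Real.sin_neg]
    field_simp

lemma integral_snc_eq (R : ℝ) : (∫ x in (0:ℝ)..R, snc x) = ∫ x in (0:ℝ)..R, Real.sin x / x := by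
  apply intervalIntegral.integral_congr_ae
  have h0 : ∀ᵐ x : ℝ, x ≠ (0:ℝ) := by
    rw [ae_iff]
    convert Real.volume_singleton (a := 0) using 2
    ext x; simp
  filter_upwards [h0] with x hx _
  simp [snc, hx]

lemma tendsto_integral_snc :
    Tendsto (fun R : ℝ => ∫ x in (0:ℝ)..R, snc x) atTop (𝓝 (π/2)) := by
  have := tendsto_dirichlet
  apply this.congr
  intro R
  exact (integral_snc_eq R).symm

lemma integral_snc_neg (T : ℝ) : (∫ x in (0:ℝ)..(-T), snc x) = -∫ x in (0:ℝ)..T, snc x := by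
  have h := intervalIntegral.integral_comp_neg (a := (0:ℝ)) (b := T) (fun x => snc x)
  simp only [neg_zero] at h
  have h2 : (∫ x in (0:ℝ)..T, snc (-x)) = ∫ x in (0:ℝ)..T, snc x := by
    apply intervalIntegral.integral_congr
    intro x _
    exact snc_even x
  rw [h2] at h
  rw [h, intervalIntegral.integral_symm]

lemma tendsto_integral_snc_atBot :
    Tendsto (fun S : ℝ => ∫ x in (0:ℝ)..S, snc x) atBot (𝓝 (-(π/2))) := by
  have h : Tendsto (fun S : ℝ => -∫ x in (0:ℝ)..(-S), snc x) atBot (𝓝 (-(π/2))) :=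
    (tendsto_integral_snc.comp tendsto_neg_atBot_atTop).neg
  apply h.congr
  intro S
  rw [← integral_snc_neg, neg_neg]

lemma tendsto_snc_scaled (a : ℝ) (ha : a ≠ 0) :
    Tendsto (fun R : ℝ => ∫ x in (0:ℝ)..R, snc (a*x)) atTop (𝓝 (π/2 / |a|)) := by
  have hrw : ∀ R : ℝ, (∫ x in (0:ℝ)..R, snc (a*x)) = a⁻¹ * ∫ u in (0:ℝ)..(a*R), snc u := by
    intro R
    have := intervalIntegral.integral_comp_mul_left (a := (0:ℝ)) (b := R) (c := a) snc ha
    rw [this, mul_zero, smul_eq_mul]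
  rcases lt_or_gt_of_ne ha with hneg | hpos
  · have hcomp : Tendsto (fun R : ℝ => a * R) atTop atBot :=
      (tendsto_const_mul_atBot_of_neg hneg).mpr tendsto_id
    have h2 := (tendsto_integral_snc_atBot.comp hcomp).const_mul a⁻¹
    have hval : a⁻¹ * -(π/2) = π/2 / |a| := by
      rw [abs_of_neg hneg]; field_simp
    rw [← hval]
    apply h2.congr
    intro R
    rw [hrw R]; rfl
  · have hcomp : Tendsto (fun R : ℝ => a * R) atTop atTop :=
      (tendsto_const_mul_atTop_of_pos hpos).mpr tendsto_id
    have h2 := (tendsto_integral_snc.comp hcomp).const_mul a⁻¹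
    have hval : a⁻¹ * (π/2) = π/2 / |a| := by
      rw [abs_of_pos hpos]; field_simp
    rw [← hval]
    apply h2.congr
    intro R
    rw [hrw R]; rfl

lemma sKer_eq_snc (r : ℝ) : sKer r = snc (π * r) := by
  rcases eq_or_ne r 0 with rfl | hr
  · simp [sKer, snc]
  · have : π * r ≠ 0 := mul_ne_zero Real.pi_ne_zero hr
    rw [sKer, snc, if_neg hr, if_neg this]

lemma sKer_cont : Continuous sKer := by
  have : Continuous fun r : ℝ => snc (π * r) := snc_cont.comp (continuous_const.mul continuous_id)
  exact this.congr fun r => (sKer_eq_snc r).symm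

lemma sKer_even (r : ℝ) : sKer (-r) = sKer r := by
  rw [sKer_eq_snc, sKer_eq_snc, mul_neg, snc_even]

lemma hasDerivAt_primitive (r : ℝ) :
    HasDerivAt (fun x : ℝ => ∫ u in (0:ℝ)..x, sKer u) (sKer r) r := by
  exact intervalIntegral.integral_hasDerivAt_right
    (sKer_cont.intervalIntegrable 0 r)
    (sKer_cont.stronglyMeasurableAtFilter _ _)
    sKer_cont.continuousAt

lemma primitive_odd (r : ℝ) : (∫ u in (0:ℝ)..(-r), sKer u) = -∫ u in (0:ℝ)..r, sKer u := by
  have h := intervalIntegral.integral_comp_neg (a := (0:ℝ)) (b := r) (fun x => sKer x)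
  simp only [neg_zero] at h
  have h2 : (∫ x in (0:ℝ)..r, sKer (-x)) = ∫ x in (0:ℝ)..r, sKer x := by
    apply intervalIntegral.integral_congr
    intro x _
    exact sKer_even x
  rw [h2] at h
  rw [h, intervalIntegral.integral_symm]

lemma epsS_odd (r : ℝ) : epsS (-r) = - epsS r := by
  rw [epsS, epsS, primitive_odd, Real.sign_neg]
  ring

lemma tendsto_primitive :
    Tendsto (fun R : ℝ => ∫ u in (0:ℝ)..R, sKer u) atTop (𝓝 (1/2)) := by
  have h := tendsto_snc_scaled π Real.pi_ne_zero
  have hval : π/2 / |π| = 1/2 := by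
    rw [abs_of_pos Real.pi_pos]
    field_simp
  rw [hval] at h
  apply h.congr
  intro R
  apply intervalIntegral.integral_congr
  intro x _
  exact (sKer_eq_snc x).symm

lemma sKer_mul_cos (k : ℝ) (ha : π + 2*π*k ≠ 0) (hb : π - 2*π*k ≠ 0) (r : ℝ) :
    sKer r * Real.cos (2*π*k*r)
      = (1/(2*π)) * ((π + 2*π*k) * snc ((π + 2*π*k)*r) + (π - 2*π*k) * snc ((π - 2*π*k)*r)) := by
  rcases eq_or_ne r 0 with rfl | hr
  · simp only [mul_zero, sKer, snc, if_pos rfl, Real.cos_zero, mul_one]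
    field_simp
    ring
  · have har : (π + 2*π*k) * r ≠ 0 := mul_ne_zero ha hr
    have hbr : (π - 2*π*k) * r ≠ 0 := mul_ne_zero hb hr
    have hpr : π * r ≠ 0 := mul_ne_zero Real.pi_ne_zero hr
    rw [sKer, if_neg hr, snc, if_neg har, snc, if_neg hbr]
    rw [mul_div_assoc', mul_div_mul_left _ _ ha, mul_div_assoc', mul_div_mul_left _ _ hb]
    have hs1 : Real.sin ((π + 2*π*k) * r) = Real.sin (π*r) * Real.cos (2*π*k*r)
        + Real.cos (π*r) * Real.sin (2*π*k*r) := by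
      rw [← Real.sin_add]; ring_nf
    have hs2 : Real.sin ((π - 2*π*k) * r) = Real.sin (π*r) * Real.cos (2*π*k*r)
        - Real.cos (π*r) * Real.sin (2*π*k*r) := by
      rw [← Real.sin_sub]; ring_nf
    rw [hs1, hs2]
    field_simp
    ring

lemma tendsto_sKer_cos (k : ℝ) (ha : π + 2*π*k ≠ 0) (hb : π - 2*π*k ≠ 0) :
    Tendsto (fun R : ℝ => ∫ r in (0:ℝ)..R, sKer r * Real.cos (2*π*k*r)) atTop
      (𝓝 (((π + 2*π*k)/|π + 2*π*k| + (π - 2*π*k)/|π - 2*π*k|)/4)) := by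
  set a := π + 2*π*k
  set b := π - 2*π*k
  have h1 := (tendsto_snc_scaled a ha).const_mul a
  have h2 := (tendsto_snc_scaled b hb).const_mul b
  have h3 := ((h1.add h2).const_mul (1/(2*π)))
  have hval : (1/(2*π)) * (a * (π/2/|a|) + b * (π/2/|b|)) = (a/|a| + b/|b|)/4 := by
    rw [show a * (π/2/|a|) = π/2 * (a/|a|) by ring, show b * (π/2/|b|) = π/2 * (b/|b|) by ring]
    generalize a/|a| = u
    generalize b/|b| = v
    field_simp
    ring
  rw [hval] at h3
  apply h3.congr
  intro R
  have hca : Continuous (fun x : ℝ => a * snc (a*x)) :=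
    continuous_const.mul (snc_cont.comp (continuous_const.mul continuous_id))
  have hcb : Continuous (fun x : ℝ => b * snc (b*x)) :=
    continuous_const.mul (snc_cont.comp (continuous_const.mul continuous_id))
  rw [← intervalIntegral.integral_const_mul a, ← intervalIntegral.integral_const_mul b,
    ← intervalIntegral.integral_add (hca.intervalIntegrable 0 R) (hcb.intervalIntegrable 0 R),
    ← intervalIntegral.integral_const_mul]
  apply intervalIntegral.integral_congr
  intro x _
  exact (sKer_mul_cos k ha hb x).symm

lemma ae_ne_zero' : ∀ᵐ x : ℝ, x ≠ (0:ℝ) := by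
  rw [ae_iff]
  convert Real.volume_singleton (a := 0) using 2
  ext x; simp

/-- Fourier transform of `ε_s`: for `k ≠ 0` with `|k| ≠ 1/2`, the symmetric improper integral
`lim_{R→∞} ∫_{-R}^{R} ε_s(r) e^{2πikr} dr` exists and equals `0` when `0 < |k| < 1/2` and
`1/(2πik)` when `|k| > 1/2`. -/
theorem epsS_fourier (k : ℝ) (hk0 : k ≠ 0) (hk : |k| ≠ 1/2) :
    Tendsto (fun R : ℝ =>
        ∫ r in (-R)..R, ((epsS r : ℝ) : ℂ) * Complex.exp (2 * Real.pi * Complex.I * k * r))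
      atTop
      (nhds (if |k| < 1/2 then 0 else 1 / (2 * Real.pi * Complex.I * k))) := by
  have hpi := Real.pi_pos
  have hc : (2*π*k) ≠ 0 := mul_ne_zero (mul_ne_zero two_ne_zero Real.pi_ne_zero) hk0
  have hkneg : k ≠ -(1/2) := by intro h; subst h; simp at hk
  have hkpos : k ≠ 1/2 := by intro h; subst h; simp at hk
  have ha : π + 2*π*k ≠ 0 := by
    intro h
    have h' : π * (1 + 2*k) = 0 := by linarith
    rcases mul_eq_zero.1 h' with h'' | h''
    · exact Real.pi_ne_zero h''
    · exact hkneg (by linarith)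
  have hb : π - 2*π*k ≠ 0 := by
    intro h
    have h' : π * (1 - 2*k) = 0 := by linarith
    rcases mul_eq_zero.1 h' with h'' | h''
    · exact Real.pi_ne_zero h''
    · exact hkpos (by linarith)
  set P : ℝ → ℝ := fun r => ∫ u in (0:ℝ)..r, sKer u with hPdef
  have hPcont : Continuous P := continuous_iff_continuousAt.2 fun r =>
    (hasDerivAt_primitive r).continuousAt
  set e : ℝ → ℂ := fun r => Complex.exp (2*(π:ℂ)*Complex.I*k*r) with hedef
  have hecont : Continuous e := by
    apply Complex.continuous_exp.comp
    continuity
  set f : ℝ → ℂ := fun r => ((epsS r : ℝ) : ℂ) * e r with hfdef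
  set J : ℝ → ℝ := fun R => ∫ r in (0:ℝ)..R, (P r - 1/2) * Real.sin (2*π*k*r) with hJdef
  -- the key pointwise exp identity
  have hexpid : ∀ x : ℝ, e x - e (-x) = 2 * (Real.sin (2*π*k*x) : ℂ) * Complex.I := by
    intro x
    have h1 : (2*(π:ℂ)*Complex.I*k*x) = ((2*π*k*x : ℝ) : ℂ) * Complex.I := by push_cast; ring
    have h2 : (2*(π:ℂ)*Complex.I*k*(-x:ℝ)) = (-(2*π*k*x : ℝ) : ℂ) * Complex.I := by push_cast; ring
    rw [hedef]
    simp only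
    rw [h1, h2, Complex.exp_mul_I, Complex.exp_mul_I]
    rw [← Complex.ofReal_neg, ← Complex.ofReal_cos, ← Complex.ofReal_cos,
      ← Complex.ofReal_sin, ← Complex.ofReal_sin, Real.cos_neg, Real.sin_neg]
    push_cast
    ring
  -- the key identity for positive R
  have key : ∀ R : ℝ, 0 < R →
      (∫ r in (-R)..R, ((epsS r : ℝ) : ℂ) * Complex.exp (2*(π:ℂ)*Complex.I*k*r))
        = (2*Complex.I) * ((∫ r in (0:ℝ)..R, epsS r * Real.sin (2*π*k*r) : ℝ) : ℂ) := by
    intro R hR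
    have hg1cont : Continuous (fun r : ℝ => ((P r - 1/2 : ℝ) : ℂ) * e r) :=
      (Complex.continuous_ofReal.comp (hPcont.sub continuous_const)).mul hecont
    have hg2cont : Continuous (fun r : ℝ => ((P r + 1/2 : ℝ) : ℂ) * e r) :=
      (Complex.continuous_ofReal.comp (hPcont.add continuous_const)).mul hecont
    have hint1 : IntervalIntegrable f volume 0 R := by
      rw [intervalIntegrable_iff, uIoc_of_le hR.le]
      apply (hg1cont.integrableOn_Ioc).congr_fun _ measurableSet_Ioc
      intro x hx
      rw [hfdef]
      simp only
      rw [epsS, Real.sign_of_pos hx.1]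
      norm_num
      exact Or.inl rfl
    have hint2 : IntervalIntegrable f volume (-R) 0 := by
      rw [intervalIntegrable_iff, uIoc_of_le (neg_nonpos.2 hR.le)]
      apply (hg2cont.integrableOn_Ioc).congr
      filter_upwards [ae_restrict_mem measurableSet_Ioc, ae_restrict_of_ae ae_ne_zero'] with x hx hne
      have hxlt : x < 0 := lt_of_le_of_ne hx.2 hne
      rw [hfdef]
      simp only
      rw [epsS, Real.sign_of_neg hxlt]
      norm_num
      exact Or.inl rfl
    have hint3 : IntervalIntegrable (fun x => f (-x)) volume 0 R := by
      have := (IntervalIntegrable.iff_comp_neg).mp hint2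
      simpa using this.symm
    have hsplit := intervalIntegral.integral_add_adjacent_intervals hint2 hint1
    have hflip : (∫ x in (0:ℝ)..R, f (-x)) = ∫ x in (-R)..(0:ℝ), f x := by
      simpa using intervalIntegral.integral_comp_neg (a := (0:ℝ)) (b := R) f
    calc (∫ r in (-R)..R, ((epsS r : ℝ) : ℂ) * Complex.exp (2*(π:ℂ)*Complex.I*k*r))
        = (∫ x in (-R)..(0:ℝ), f x) + ∫ x in (0:ℝ)..R, f x := hsplit.symm
      _ = (∫ x in (0:ℝ)..R, f (-x)) + ∫ x in (0:ℝ)..R, f x := by rw [hflip]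
      _ = ∫ x in (0:ℝ)..R, (f (-x) + f x) := (intervalIntegral.integral_add hint3 hint1).symm
      _ = ∫ x in (0:ℝ)..R, (2*Complex.I) * ((epsS x * Real.sin (2*π*k*x) : ℝ) : ℂ) := by
          apply intervalIntegral.integral_congr
          intro x _
          rw [hfdef]
          simp only
          rw [epsS_odd x]
          have := hexpid x
          have hgoal : ((-(epsS x) : ℝ) : ℂ) * e (-x) + (epsS x : ℂ) * e x
              = (epsS x : ℂ) * (e x - e (-x)) := by push_cast; ring
          rw [hgoal, this, Complex.ofReal_mul]
          ring
      _ = (2*Complex.I) * ((∫ r in (0:ℝ)..R, epsS r * Real.sin (2*π*k*r) : ℝ) : ℂ) := by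
          rw [intervalIntegral.integral_const_mul, intervalIntegral.integral_ofReal]
  
  set L : ℝ := ((π + 2*π*k)/|π + 2*π*k| + (π - 2*π*k)/|π - 2*π*k|)/4 with hLdef
  set M : ℝ := -(1/(4*π*k)) + (1/(2*π*k)) * L with hMdef
  have hv : ∀ x : ℝ, HasDerivAt (fun r : ℝ => -Real.cos (2*π*k*r)/(2*π*k))
      (Real.sin (2*π*k*x)) x := by
    intro x
    have h1 : HasDerivAt (fun r : ℝ => 2*π*k*r) (2*π*k) x := by
      simpa using (hasDerivAt_id x).const_mul (2*π*k)
    have h2 := (Real.hasDerivAt_cos (2*π*k*x)).comp x h1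
    have h3 := h2.neg.div_const (2*π*k)
    refine h3.congr_deriv ?_
    field_simp
  have parts : ∀ R : ℝ, J R = (P R - 1/2) * (-Real.cos (2*π*k*R)/(2*π*k)) - 1/(4*π*k)
      + (1/(2*π*k)) * ∫ r in (0:ℝ)..R, sKer r * Real.cos (2*π*k*r) := by
    intro R
    have hu : ∀ x ∈ Set.uIcc (0:ℝ) R, HasDerivAt (fun r => P r - 1/2) (sKer x) x :=
      fun x _ => (hasDerivAt_primitive x).sub_const _
    have hparts := intervalIntegral.integral_mul_deriv_eq_deriv_mul hu
      (fun x _ => hv x) (sKer_cont.intervalIntegrable 0 R)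
      ((Real.continuous_sin.comp (by continuity : Continuous fun r : ℝ => 2*π*k*r)).intervalIntegrable 0 R)
    rw [hJdef]
    simp only
    rw [hparts]
    have hP0 : P 0 = 0 := intervalIntegral.integral_same
    have hlast : (∫ x in (0:ℝ)..R, sKer x * (-Real.cos (2*π*k*x)/(2*π*k)))
        = (-(1/(2*π*k))) * ∫ r in (0:ℝ)..R, sKer r * Real.cos (2*π*k*r) := by
      rw [← intervalIntegral.integral_const_mul]
      apply intervalIntegral.integral_congr
      intro x _
      field_simp
    rw [hlast, hP0, mul_zero, Real.cos_zero]
    field_simp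
    ring
  have hClim := tendsto_sKer_cos k ha hb
  have hterm1 : Tendsto (fun R => (P R - 1/2) * (-Real.cos (2*π*k*R)/(2*π*k))) atTop (𝓝 0) := by
    apply squeeze_zero_norm' (a := fun R => |P R - 1/2| * (1/(2*π*|k|)))
    · filter_upwards with R
      rw [Real.norm_eq_abs, abs_mul]
      apply mul_le_mul_of_nonneg_left _ (abs_nonneg _)
      rw [abs_div, abs_neg, abs_mul, abs_mul]
      rw [abs_of_pos (by norm_num : (0:ℝ) < 2), abs_of_pos hpi]
      rw [div_le_div_iff₀ (by positivity) (by positivity)]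
      have := Real.abs_cos_le_one (2*π*k*R)
      nlinarith [abs_nonneg k, abs_pos.2 hk0, mul_pos (mul_pos (by norm_num : (0:ℝ)<2) hpi) (abs_pos.2 hk0)]
    · have h0 : Tendsto (fun R : ℝ => P R - 1/2) atTop (𝓝 0) := by
        have := tendsto_primitive.sub_const (1/2)
        simpa [hPdef] using this
      have := (h0.abs).mul_const (1/(2*π*|k|))
      simpa using this
  have hJlim : Tendsto J atTop (𝓝 M) := by
    have h2 : Tendsto (fun R => (P R - 1/2) * (-Real.cos (2*π*k*R)/(2*π*k)) - 1/(4*π*k)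
        + (1/(2*π*k)) * ∫ r in (0:ℝ)..R, sKer r * Real.cos (2*π*k*r)) atTop
        (𝓝 (0 - 1/(4*π*k) + (1/(2*π*k))*L)) :=
      (hterm1.sub_const _).add (hClim.const_mul _)
    have hM : M = 0 - 1/(4*π*k) + (1/(2*π*k))*L := by rw [hMdef]; ring
    rw [hM]
    exact h2.congr (fun R => (parts R).symm)
  have hfinal : Tendsto (fun R : ℝ => (2*Complex.I) * ((J R : ℝ) : ℂ)) atTop
      (𝓝 ((2*Complex.I) * (M : ℂ))) :=
    ((Complex.continuous_ofReal.tendsto M).comp hJlim).const_mul _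
  have hcong : (fun R : ℝ => (2*Complex.I) * ((J R : ℝ) : ℂ))
      =ᶠ[atTop] (fun R : ℝ =>
        ∫ r in (-R)..R, ((epsS r : ℝ) : ℂ) * Complex.exp (2*(π:ℂ)*Complex.I*k*r)) := by
    filter_upwards [eventually_gt_atTop (0:ℝ)] with R hR
    rw [key R hR]
    congr 1
    norm_cast
    rw [hJdef]
    simp only
    apply intervalIntegral.integral_congr_ae
    apply ae_of_all
    intro x hx
    rw [uIoc_of_le hR.le] at hx
    rw [epsS, Real.sign_of_pos hx.1]
    norm_num
    exact Or.inl rfl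
  have hT : (if |k| < 1/2 then (0:ℂ) else 1/(2*(π:ℂ)*Complex.I*k)) = (2*Complex.I) * (M : ℂ) := by
    by_cases h : |k| < 1/2
    · rw [if_pos h]
      obtain ⟨h1, h2⟩ := abs_lt.mp h
      have ha' : 0 < π + 2*π*k := by nlinarith
      have hb' : 0 < π - 2*π*k := by nlinarith
      have hL : L = 1/2 := by
        rw [hLdef, abs_of_pos ha', abs_of_pos hb', div_self ha'.ne', div_self hb'.ne']
        norm_num
      have hM0 : M = 0 := by
        rw [hMdef, hL]
        field_simp
        ring
      rw [hM0]
      simp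
    · rw [if_neg h]
      have habs : 1/2 < |k| := lt_of_le_of_ne (not_lt.1 h) (Ne.symm hk)
      have hL : L = 0 := by
        rcases lt_or_gt_of_ne hk0 with hneg | hpos
        · have hk2 : k < -(1/2) := by
            rw [abs_of_neg hneg] at habs; linarith
          have ha' : π + 2*π*k < 0 := by nlinarith
          have hb' : 0 < π - 2*π*k := by nlinarith
          rw [hLdef, abs_of_neg ha', abs_of_pos hb', div_neg, div_self ha, div_self hb]
          norm_num
        · have hk2 : 1/2 < k := by
            rw [abs_of_pos hpos] at habs; linarith
          have ha' : 0 < π + 2*π*k := by nlinarith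
          have hb' : π - 2*π*k < 0 := by nlinarith
          rw [hLdef, abs_of_pos ha', abs_of_neg hb', div_neg, div_self ha, div_self hb]
          norm_num
      have hM' : M = -(1/(4*π*k)) := by rw [hMdef, hL]; ring
      rw [hM']
      have hknz : (k:ℂ) ≠ 0 := Complex.ofReal_ne_zero.2 hk0
      have hpinz : ((π:ℝ):ℂ) ≠ 0 := Complex.ofReal_ne_zero.2 Real.pi_ne_zero
      push_cast
      field_simp
      rw [Complex.I_sq]
      ring

  exact hT ▸ hfinal.congr' hcong
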